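/- Fix T > 0, an integer d ≥ 1, and real numbers β₁, …, β_d. Let Q be a d×d substochastic matrix with zero diagonal and Qⁿ → 0, and let ψ be the associated regulator map. Then ψ is Lipschitz continuous on ∏_{i=1}^d D^{β_i}[0,T] with respect to the product J₁ distance: there exists a constant C < ∞ such that for all ξ = (ξ⁽¹⁾,…,ξ⁽ᵈ⁾) and ζ = (ζ⁽¹⁾,…,ζ⁽ᵈ⁾) with ξ⁽ⁱ⁾, ζ⁽ⁱ⁾ ∈ D^{β_i}[0,T] for each i, one has d_p(ψ(ξ), ψ(ζ)) ≤ C · d_p(ξ, ζ). -/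

import Mathlib

open Set Filter

noncomputable section

/-- `f` is càdlàg on `[0,T]`: right-continuous on `[0,T)` and with left limits on `(0,T]`. -/
def Cadlag (T : ℝ) (f : ℝ → ℝ) : Prop :=
  (∀ t ∈ Set.Ico (0:ℝ) T, Filter.Tendsto f (nhdsWithin t (Set.Ici t)) (nhds (f t))) ∧
  (∀ t ∈ Set.Ioc (0:ℝ) T, ∃ L : ℝ, Filter.Tendsto f (nhdsWithin t (Set.Iio t)) (nhds L))

/-- `lam` is a strictly increasing continuous bijection of `[0,T]` onto itself. -/
def IsTimeChange (T : ℝ) (lam : ℝ → ℝ) : Prop :=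
  StrictMonoOn lam (Set.Icc 0 T) ∧ ContinuousOn lam (Set.Icc 0 T) ∧
  Set.MapsTo lam (Set.Icc 0 T) (Set.Icc 0 T) ∧
  Set.SurjOn lam (Set.Icc 0 T) (Set.Icc 0 T) ∧ lam 0 = 0 ∧ lam T = T

/-- Uniform distance of two (bounded) functions over `[0,T]`. -/
def unifDist (T : ℝ) (f g : ℝ → ℝ) : ℝ :=
  sSup {r : ℝ | ∃ t ∈ Set.Icc (0:ℝ) T, r = |f t - g t|}

/-- The Skorokhod `J₁` distance on `[0,T]`. -/
def J1Dist (T : ℝ) (f g : ℝ → ℝ) : ℝ :=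
  sInf {r : ℝ | ∃ lam : ℝ → ℝ, IsTimeChange T lam ∧
    r = max (unifDist T (fun t => f (lam t)) g) (unifDist T lam id)}

/-- The product `J₁` distance on `d`-tuples of paths. -/
def prodJ1Dist (T : ℝ) {d : ℕ} (ξ ζ : Fin d → ℝ → ℝ) : ℝ :=
  ∑ i, J1Dist T (ξ i) (ζ i)

/-- A substochastic routing matrix with zero diagonal whose powers tend to zero. -/
def Substochastic {d : ℕ} (Q : Matrix (Fin d) (Fin d) ℝ) : Prop :=
  (∀ i j, 0 ≤ Q i j) ∧ (∀ i, Q i i = 0) ∧ (∀ i, ∑ j, Q i j ≤ 1) ∧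
  Filter.Tendsto (fun n : ℕ => Q ^ n) Filter.atTop (nhds 0)

/-- The reflection matrix `𝒬 = I - Qᵀ`. -/
def refMatrix {d : ℕ} (Q : Matrix (Fin d) (Fin d) ℝ) : Matrix (Fin d) (Fin d) ℝ :=
  1 - Q.transpose

/-- `ζ` belongs to the feasible regulator set `Ψ(ξ)`: each coordinate of `ζ` is a
nondecreasing càdlàg path, nonnegative at the origin, and `ξ + 𝒬 ζ ≥ 0` on `[0,T]`. -/
def Feasible (T : ℝ) {d : ℕ} (Q : Matrix (Fin d) (Fin d) ℝ)
    (ξ ζ : Fin d → ℝ → ℝ) : Prop :=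
  (∀ i, Cadlag T (ζ i) ∧ MonotoneOn (ζ i) (Set.Icc 0 T) ∧ 0 ≤ ζ i 0) ∧
  (∀ t ∈ Set.Icc (0:ℝ) T, ∀ i, 0 ≤ ξ i t + ∑ j, refMatrix Q i j * ζ j t)

/-- The regulator map `ψ`, defined coordinatewise and pointwise as the infimum of the
feasible regulator set. -/
def regulator (T : ℝ) {d : ℕ} (Q : Matrix (Fin d) (Fin d) ℝ)
    (ξ : Fin d → ℝ → ℝ) : Fin d → ℝ → ℝ :=
  fun i t => sInf {z : ℝ | ∃ ζ, Feasible T Q ξ ζ ∧ z = ζ i t}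

/-- The content map `φ(ξ) = ξ + 𝒬 ψ(ξ)`. -/
def content (T : ℝ) {d : ℕ} (Q : Matrix (Fin d) (Fin d) ℝ)
    (ξ : Fin d → ℝ → ℝ) : Fin d → ℝ → ℝ :=
  fun i t => ξ i t + ∑ j, refMatrix Q i j * regulator T Q ξ j t

/-- `D^β[0,T]`: càdlàg paths `f` with `f 0 ≥ 0` such that `t ↦ f t - β t` is nondecreasing. -/
def DBeta (T β : ℝ) (f : ℝ → ℝ) : Prop :=
  Cadlag T f ∧ 0 ≤ f 0 ∧ MonotoneOn (fun t => f t - β * t) (Set.Icc 0 T)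

section AuxLemmas

variable {d : ℕ}

lemma abs_sub_le_abs_add_abs (x y : ℝ) : |x - y| ≤ |x| + |y| := by
  rw [sub_eq_add_neg]
  exact (abs_add_le _ _).trans (by rw [abs_neg])

lemma sum_ref (Q : Matrix (Fin d) (Fin d) ℝ) (w : Fin d → ℝ) (i : Fin d) :
    ∑ j, refMatrix Q i j * w j = w i - ∑ j, Q j i * w j := by
  simp [refMatrix, Matrix.sub_apply, Matrix.transpose_apply, sub_mul,
    Finset.sum_sub_distrib, Matrix.one_apply, ite_mul]

lemma pow_entry_nonneg {Q : Matrix (Fin d) (Fin d) ℝ} (hQ0 : ∀ i j, 0 ≤ Q i j) :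
    ∀ n i j, 0 ≤ (Q ^ n) i j := by
  intro n
  induction n with
  | zero =>
    intro i j
    simp only [pow_zero, Matrix.one_apply]
    split <;> norm_num
  | succ n ih =>
    intro i j
    rw [pow_succ, Matrix.mul_apply]
    exact Finset.sum_nonneg fun k _ => mul_nonneg (ih i k) (hQ0 k j)

lemma entry_le_one {Q : Matrix (Fin d) (Fin d) ℝ} (hQ : Substochastic Q) (i j : Fin d) :
    Q i j ≤ 1 :=
  le_trans (Finset.single_le_sum (fun k _ => hQ.1 i k) (Finset.mem_univ j)) (hQ.2.2.1 i)

lemma exists_w (hd : 1 ≤ d) (Q : Matrix (Fin d) (Fin d) ℝ) (hQ : Substochastic Q) :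
    ∃ w : Fin d → ℝ, (∀ i, 0 ≤ w i) ∧ (∀ i, 1 ≤ w i - ∑ j, Q j i * w j) := by
  have hdR : (0:ℝ) < d := by exact_mod_cast hd
  have hent : ∀ k i : Fin d, Filter.Tendsto (fun n : ℕ => (Q ^ n) k i) Filter.atTop (nhds 0) := by
    intro k i
    have hc : Continuous fun M : Matrix (Fin d) (Fin d) ℝ => M k i :=
      (continuous_apply i).comp (continuous_apply k)
    have := (hc.tendsto 0).comp hQ.2.2.2
    exact this
  have hδ : (0:ℝ) < 1 / (2 * d) := by positivity
  have hev : ∀ᶠ n : ℕ in Filter.atTop, ∀ k i : Fin d, |(Q ^ n) k i| < 1 / (2 * d) := by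
    rw [Filter.eventually_all]
    intro k
    rw [Filter.eventually_all]
    intro i
    have := (hent k i).eventually (eventually_abs_sub_lt 0 hδ)
    simpa using this
  obtain ⟨N, hN⟩ := hev.exists
  set u : ℕ → Fin d → ℝ := fun n i => ∑ k, (Q ^ n) k i with hu
  have hstep : ∀ n i, ∑ j, Q j i * u n j = u (n + 1) i := by
    intro n i
    calc ∑ j, Q j i * u n j = ∑ j, ∑ k, (Q ^ n) k j * Q j i := by
          simp only [hu, Finset.mul_sum]
          exact Finset.sum_congr rfl fun j _ => Finset.sum_congr rfl fun k _ => mul_comm _ _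
      _ = ∑ k, ∑ j, (Q ^ n) k j * Q j i := Finset.sum_comm
      _ = ∑ k, (Q ^ (n + 1)) k i := by
          refine Finset.sum_congr rfl fun k _ => ?_
          rw [pow_succ, Matrix.mul_apply]
      _ = u (n + 1) i := rfl
  have hu0 : ∀ i, u 0 i = 1 := by
    intro i; simp [hu, Matrix.one_apply]
  have huN : ∀ i, u N i ≤ 1 / 2 := by
    intro i
    have h1 : u N i ≤ ∑ _k : Fin d, 1 / (2 * (d:ℝ)) :=
      Finset.sum_le_sum fun k _ => le_of_lt (lt_of_abs_lt (hN k i))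
    have h2 : ∑ _k : Fin d, 1 / (2 * (d:ℝ)) = d * (1 / (2 * d)) := by
      rw [Finset.sum_const, Finset.card_univ, Fintype.card_fin, nsmul_eq_mul]
    have h3 : (d:ℝ) * (1 / (2 * d)) = 1 / 2 := by
      field_simp
    linarith [h1, h2.le, h2.ge]
  have hunn : ∀ n i, 0 ≤ u n i := fun n i =>
    Finset.sum_nonneg fun k _ => pow_entry_nonneg hQ.1 n k i
  refine ⟨fun i => 2 * ∑ n ∈ Finset.range N, u n i, ?_, ?_⟩
  · intro i
    dsimp only
    have : 0 ≤ ∑ n ∈ Finset.range N, u n i :=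
      Finset.sum_nonneg fun n _ => hunn n i
    linarith
  · intro i
    dsimp only
    have hsum : ∑ j, Q j i * (2 * ∑ n ∈ Finset.range N, u n j)
        = 2 * ∑ n ∈ Finset.range N, u (n + 1) i := by
      calc ∑ j, Q j i * (2 * ∑ n ∈ Finset.range N, u n j)
          = 2 * ∑ j, Q j i * ∑ n ∈ Finset.range N, u n j := by
            rw [Finset.mul_sum]; exact Finset.sum_congr rfl fun j _ => by ring
        _ = 2 * ∑ j, ∑ n ∈ Finset.range N, Q j i * u n j := by
            congr 1; exact Finset.sum_congr rfl fun j _ => Finset.mul_sum _ _ _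
        _ = 2 * ∑ n ∈ Finset.range N, ∑ j, Q j i * u n j := by rw [Finset.sum_comm]
        _ = 2 * ∑ n ∈ Finset.range N, u (n + 1) i := by
            congr 1; exact Finset.sum_congr rfl fun n _ => hstep n i
    rw [hsum]
    have e1 : ∑ n ∈ Finset.range (N + 1), u n i
        = (∑ n ∈ Finset.range N, u (n + 1) i) + u 0 i := Finset.sum_range_succ' _ _
    have e2 : ∑ n ∈ Finset.range (N + 1), u n i
        = (∑ n ∈ Finset.range N, u n i) + u N i := Finset.sum_range_succ _ _
    have := huN i
    have := hu0 i
    linarith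

end AuxLemmas
section CadlagLemmas

lemma Cadlag.min' {T : ℝ} {f g : ℝ → ℝ} (hf : Cadlag T f) (hg : Cadlag T g) :
    Cadlag T (fun t => min (f t) (g t)) := by
  constructor
  · intro t ht
    exact (hf.1 t ht).min (hg.1 t ht)
  · intro t ht
    obtain ⟨Lf, hLf⟩ := hf.2 t ht
    obtain ⟨Lg, hLg⟩ := hg.2 t ht
    exact ⟨min Lf Lg, hLf.min hLg⟩

lemma Cadlag.add_const {T : ℝ} {f : ℝ → ℝ} (hf : Cadlag T f) (c : ℝ) :
    Cadlag T (fun t => f t + c) := by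
  constructor
  · intro t ht
    exact (hf.1 t ht).add tendsto_const_nhds
  · intro t ht
    obtain ⟨L, hL⟩ := hf.2 t ht
    exact ⟨L + c, hL.add tendsto_const_nhds⟩

lemma cadlag_of_continuous {T : ℝ} {g : ℝ → ℝ} (hg : Continuous g) : Cadlag T g := by
  constructor
  · intro t _
    exact (hg.tendsto t).mono_left nhdsWithin_le_nhds
  · intro t _
    exact ⟨g t, (hg.tendsto t).mono_left nhdsWithin_le_nhds⟩

lemma cadlag_const {T c : ℝ} : Cadlag T (fun _ => c) :=
  cadlag_of_continuous continuous_const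

lemma cadlag_of_lip {T L : ℝ} {f : ℝ → ℝ} (hL : 0 ≤ L)
    (h : ∀ x ∈ Set.Icc 0 T, ∀ t ∈ Set.Icc 0 T, |f x - f t| ≤ L * |x - t|) :
    Cadlag T f := by
  constructor
  · intro t ht
    rw [Metric.tendsto_nhdsWithin_nhds]
    intro ε hε
    refine ⟨min (ε / (L + 1)) (T - t), lt_min (by positivity) (by linarith [ht.2]), ?_⟩
    intro x hx hdist
    have htx : t ≤ x := hx
    have hd : |x - t| < min (ε / (L + 1)) (T - t) := by
      rwa [Real.dist_eq] at hdist
    have hd1 : |x - t| < ε / (L + 1) := lt_of_lt_of_le hd (min_le_left _ _)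
    have hd2 : x - t < T - t := lt_of_le_of_lt (le_abs_self _) (lt_of_lt_of_le hd (min_le_right _ _))
    have hxI : x ∈ Set.Icc 0 T := ⟨le_trans ht.1 htx, by linarith⟩
    have := h x hxI t (Set.mem_Icc.2 ⟨ht.1, le_of_lt ht.2⟩)
    rw [Real.dist_eq]
    have habs : 0 ≤ |x - t| := abs_nonneg _
    calc |f x - f t| ≤ L * |x - t| := this
      _ ≤ (L + 1) * |x - t| := by nlinarith
      _ < (L + 1) * (ε / (L + 1)) := by
          apply mul_lt_mul_of_pos_left hd1; linarith
      _ = ε := by field_simp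
  · intro t ht
    refine ⟨f t, ?_⟩
    rw [Metric.tendsto_nhdsWithin_nhds]
    intro ε hε
    refine ⟨min (ε / (L + 1)) t, lt_min (by positivity) ht.1, ?_⟩
    intro x hx hdist
    have hxt : x < t := hx
    have hd : |x - t| < min (ε / (L + 1)) t := by
      rwa [Real.dist_eq] at hdist
    have hd1 : |x - t| < ε / (L + 1) := lt_of_lt_of_le hd (min_le_left _ _)
    have hd2 : t - x < t := by
      have : t - x ≤ |x - t| := by rw [abs_sub_comm]; exact le_abs_self _
      linarith [lt_of_lt_of_le hd (min_le_right _ _)]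
    have hxI : x ∈ Set.Icc 0 T := ⟨by linarith, le_trans (le_of_lt hxt) ht.2⟩
    have := h x hxI t (Set.mem_Icc.2 ⟨le_of_lt ht.1, ht.2⟩)
    rw [Real.dist_eq]
    have habs : 0 ≤ |x - t| := abs_nonneg _
    calc |f x - f t| ≤ L * |x - t| := this
      _ ≤ (L + 1) * |x - t| := by nlinarith
      _ < (L + 1) * (ε / (L + 1)) := by
          apply mul_lt_mul_of_pos_left hd1; linarith
      _ = ε := by field_simp

end CadlagLemmas
section RegulatorLemmas

variable {d : ℕ} {T : ℝ} {Q : Matrix (Fin d) (Fin d) ℝ} {ξ : Fin d → ℝ → ℝ}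

lemma feasible_nonneg_at (hT : 0 ≤ T) {ζ : Fin d → ℝ → ℝ} (hζ : Feasible T Q ξ ζ)
    (i : Fin d) {t : ℝ} (ht : t ∈ Set.Icc 0 T) : 0 ≤ ζ i t :=
  le_trans (hζ.1 i).2.2 ((hζ.1 i).2.1 ⟨le_rfl, hT⟩ ht ht.1)

lemma regSet_bddBelow (hT : 0 ≤ T) (i : Fin d) {t : ℝ} (ht : t ∈ Set.Icc 0 T) :
    BddBelow {z : ℝ | ∃ ζ, Feasible T Q ξ ζ ∧ z = ζ i t} := by
  refine ⟨0, ?_⟩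
  rintro z ⟨ζ, hζ, rfl⟩
  exact feasible_nonneg_at hT hζ i ht

lemma regulator_le (hT : 0 ≤ T) {ζ : Fin d → ℝ → ℝ} (hζ : Feasible T Q ξ ζ)
    (i : Fin d) {t : ℝ} (ht : t ∈ Set.Icc 0 T) : regulator T Q ξ i t ≤ ζ i t := by
  simp only [regulator]
  exact csInf_le (regSet_bddBelow hT i ht) ⟨ζ, hζ, rfl⟩

lemma regulator_nonneg (hT : 0 ≤ T) (hne : ∃ ζ, Feasible T Q ξ ζ)
    (i : Fin d) {t : ℝ} (ht : t ∈ Set.Icc 0 T) : 0 ≤ regulator T Q ξ i t := by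
  simp only [regulator]
  obtain ⟨ζ₀, hζ₀⟩ := hne
  refine le_csInf ⟨ζ₀ i t, ζ₀, hζ₀, rfl⟩ ?_
  rintro z ⟨ζ, hζ, rfl⟩
  exact feasible_nonneg_at hT hζ i ht

lemma regulator_mono (hT : 0 ≤ T) (hne : ∃ ζ, Feasible T Q ξ ζ)
    (i : Fin d) {s t : ℝ} (hs : s ∈ Set.Icc 0 T) (ht : t ∈ Set.Icc 0 T) (hst : s ≤ t) :
    regulator T Q ξ i s ≤ regulator T Q ξ i t := by
  obtain ⟨ζ₀, hζ₀⟩ := hne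
  have : regulator T Q ξ i t = sInf {z : ℝ | ∃ ζ, Feasible T Q ξ ζ ∧ z = ζ i t} := rfl
  rw [this]
  refine le_csInf ⟨ζ₀ i t, ζ₀, hζ₀, rfl⟩ ?_
  rintro z ⟨ζ, hζ, rfl⟩
  exact le_trans (regulator_le hT hζ i hs) ((hζ.1 i).2.1 hs ht hst)

lemma regulator_refl_nonneg (hT : 0 ≤ T) (hne : ∃ ζ, Feasible T Q ξ ζ)
    {t : ℝ} (ht : t ∈ Set.Icc 0 T) (hQ : Substochastic Q) (i : Fin d) :
    0 ≤ ξ i t + (regulator T Q ξ i t - ∑ j, Q j i * regulator T Q ξ j t) := by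
  obtain ⟨ζ₀, hζ₀⟩ := hne
  apply le_of_forall_pos_le_add
  intro ε hε
  have hlt : sInf {z : ℝ | ∃ ζ, Feasible T Q ξ ζ ∧ z = ζ i t} < regulator T Q ξ i t + ε :=
    lt_add_of_pos_right _ hε
  obtain ⟨z, ⟨ζ, hζ, rfl⟩, hz⟩ :=
    exists_lt_of_csInf_lt (s := {z : ℝ | ∃ ζ, Feasible T Q ξ ζ ∧ z = ζ i t})
      ⟨ζ₀ i t, ζ₀, hζ₀, rfl⟩ hlt
  have hfeas := hζ.2 t ht i
  rw [sum_ref] at hfeas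
  have hsum : ∑ j, Q j i * regulator T Q ξ j t ≤ ∑ j, Q j i * ζ j t :=
    Finset.sum_le_sum fun j _ =>
      mul_le_mul_of_nonneg_left (regulator_le hT hζ j ht) (hQ.1 j i)
  linarith

lemma dbeta_lb {β : ℝ} {f : ℝ → ℝ} (hT : 0 ≤ T) (h : DBeta T β f)
    {t : ℝ} (ht : t ∈ Set.Icc 0 T) : f 0 + β * t ≤ f t := by
  have := h.2.2 ⟨le_rfl, hT⟩ ht ht.1
  simp only at this
  linarith

lemma dbeta_ub {β : ℝ} {f : ℝ → ℝ} (hT : 0 ≤ T) (h : DBeta T β f)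
    {t : ℝ} (ht : t ∈ Set.Icc 0 T) : f t ≤ f T + β * (t - T) := by
  have := h.2.2 ht ⟨hT, le_rfl⟩ ht.2
  simp only at this
  linarith

lemma dbeta_abs_bound {β : ℝ} {f : ℝ → ℝ} (hT : 0 ≤ T) (h : DBeta T β f)
    {t : ℝ} (ht : t ∈ Set.Icc 0 T) : |f t| ≤ |f 0| + |f T| + 2 * |β| * T := by
  have h1 := dbeta_lb hT h ht
  have h2 := dbeta_ub hT h ht
  have hb1 : -(|β| * T) ≤ β * t := by
    have hmul : (-β) * t ≤ |β| * t :=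
      mul_le_mul_of_nonneg_right (neg_le_abs β) ht.1
    have hmul2 : |β| * t ≤ |β| * T :=
      mul_le_mul_of_nonneg_left ht.2 (abs_nonneg β)
    nlinarith
  have hb2 : β * (t - T) ≤ |β| * T := by
    have h0 : t - T ≤ 0 := by linarith [ht.2]
    have : β * (t - T) ≤ |β * (t - T)| := le_abs_self _
    have e : |β * (t - T)| = |β| * |t - T| := abs_mul _ _
    have e2 : |t - T| = T - t := by
      rw [abs_of_nonpos h0]; ring
    have : |β| * |t - T| ≤ |β| * T := by
      rw [e2]; exact mul_le_mul_of_nonneg_left (by linarith [ht.1]) (abs_nonneg β)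
    nlinarith [le_abs_self (β * (t - T)), abs_mul β (t - T)]
  have ha0 : -|f 0| ≤ f 0 := neg_abs_le _
  have haT : f T ≤ |f T| := le_abs_self _
  rw [abs_le]
  constructor
  · nlinarith [abs_nonneg (f 0), abs_nonneg (f T), abs_nonneg β, ht.1, ht.2]
  · nlinarith [abs_nonneg (f 0), abs_nonneg (f T), abs_nonneg β, ht.1, ht.2]

lemma feasible_const {β : Fin d → ℝ} (hT : 0 ≤ T) (hβ : ∀ i, DBeta T (β i) (ξ i))
    {w : Fin d → ℝ} (hw0 : ∀ i, 0 ≤ w i) (hw1 : ∀ i, 1 ≤ w i - ∑ j, Q j i * w j) :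
    Feasible T Q ξ (fun i _ => (∑ k, (|ξ k 0| + |β k| * T)) * w i) := by
  set c : ℝ := ∑ k, (|ξ k 0| + |β k| * T) with hc
  have hterm : ∀ k, 0 ≤ |ξ k 0| + |β k| * T := fun k =>
    add_nonneg (abs_nonneg _) (mul_nonneg (abs_nonneg _) hT)
  have hc0 : 0 ≤ c := Finset.sum_nonneg fun k _ => hterm k
  have hck : ∀ k, |ξ k 0| + |β k| * T ≤ c := fun k =>
    Finset.single_le_sum (fun k _ => hterm k) (Finset.mem_univ k)
  constructor
  · intro i
    exact ⟨cadlag_const, monotoneOn_const, mul_nonneg hc0 (hw0 i)⟩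
  · intro t ht i
    rw [sum_ref Q (fun j => c * w j) i]
    have e : ∑ j, Q j i * (c * w j) = c * ∑ j, Q j i * w j := by
      rw [Finset.mul_sum]; exact Finset.sum_congr rfl fun j _ => by ring
    rw [e]
    have hlow : -c ≤ ξ i t := by
      have h1 := dbeta_lb hT (hβ i) ht
      have hb1 : -(|β i| * T) ≤ β i * t := by
        have hmul : (-(β i)) * t ≤ |β i| * t :=
          mul_le_mul_of_nonneg_right (neg_le_abs (β i)) ht.1
        have hmul2 : |β i| * t ≤ |β i| * T :=
          mul_le_mul_of_nonneg_left ht.2 (abs_nonneg (β i))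
        nlinarith
      have := hck i
      have := neg_abs_le (ξ i 0)
      linarith
    have hgap : c * 1 ≤ c * (w i - ∑ j, Q j i * w j) :=
      mul_le_mul_of_nonneg_left (hw1 i) hc0
    nlinarith

lemma feasible_exists {β : Fin d → ℝ} (hT : 0 ≤ T) (hd : 1 ≤ d)
    (hQ : Substochastic Q) (hβ : ∀ i, DBeta T (β i) (ξ i)) :
    ∃ ζ, Feasible T Q ξ ζ := by
  obtain ⟨w, hw0, hw1⟩ := exists_w hd Q hQ
  exact ⟨_, feasible_const hT hβ hw0 hw1⟩

end RegulatorLemmas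
section RegulatorLip

variable {d : ℕ} {T : ℝ} {Q : Matrix (Fin d) (Fin d) ℝ} {β : Fin d → ℝ} {ξ : Fin d → ℝ → ℝ}
  {w : Fin d → ℝ}

lemma bbeta_nonneg (β : Fin d → ℝ) : 0 ≤ ∑ k, |β k| :=
  Finset.sum_nonneg fun k _ => abs_nonneg _

lemma bbeta_ge (β : Fin d → ℝ) (i : Fin d) : -β i ≤ ∑ k, |β k| :=
  (neg_le_abs (β i)).trans
    (Finset.single_le_sum (f := fun k => |β k|) (fun k _ => abs_nonneg _) (Finset.mem_univ i))

lemma regulator_lip (hT : 0 ≤ T) (hd : 1 ≤ d) (hQ : Substochastic Q)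
    (hβ : ∀ i, DBeta T (β i) (ξ i))
    (hw0 : ∀ i, 0 ≤ w i) (hw1 : ∀ i, 1 ≤ w i - ∑ j, Q j i * w j)
    (i : Fin d) {s t : ℝ} (hs : s ∈ Set.Icc 0 T) (ht : t ∈ Set.Icc 0 T) (hst : s ≤ t) :
    regulator T Q ξ i t ≤ regulator T Q ξ i s + ((∑ k, |β k|) * w i) * (t - s) := by
  have hne : ∃ ζ, Feasible T Q ξ ζ := feasible_exists hT hd hQ hβ
  obtain ⟨ζ₀, hζ₀⟩ := hne
  set bβ : ℝ := ∑ k, |β k| with hbβ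
  have hbβ0 : 0 ≤ bβ := bbeta_nonneg β
  apply le_of_forall_pos_le_add
  intro ε hε
  have hlt : sInf {z : ℝ | ∃ ζ, Feasible T Q ξ ζ ∧ z = ζ i s} < regulator T Q ξ i s + ε :=
    lt_add_of_pos_right _ hε
  obtain ⟨z, ⟨m, hm, rfl⟩, hz⟩ :=
    exists_lt_of_csInf_lt (s := {z : ℝ | ∃ ζ, Feasible T Q ξ ζ ∧ z = ζ i s})
      ⟨ζ₀ i s, ζ₀, hζ₀, rfl⟩ hlt
  set η : Fin d → ℝ → ℝ := fun j u => min (m j u) (m j s + (bβ * w j) * max (u - s) 0) with hη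
  have hcnn : ∀ j, (0:ℝ) ≤ bβ * w j := fun j => mul_nonneg hbβ0 (hw0 j)
  have hgmono : ∀ j, Monotone (fun u => m j s + (bβ * w j) * max (u - s) 0) := by
    intro j x y hxy
    dsimp only
    have : max (x - s) 0 ≤ max (y - s) 0 := max_le_max (by linarith) le_rfl
    have := mul_le_mul_of_nonneg_left this (hcnn j)
    linarith
  have hηfe : Feasible T Q ξ η := by
    constructor
    · intro j
      refine ⟨?_, ?_, ?_⟩
      · apply Cadlag.min' (hm.1 j).1
        apply cadlag_of_continuous
        exact continuous_const.add (continuous_const.mul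
          ((continuous_id.sub continuous_const).max continuous_const))
      · intro x hx y hy hxy
        exact le_min ((min_le_left _ _).trans ((hm.1 j).2.1 hx hy hxy))
          ((min_le_right _ _).trans (hgmono j hxy))
      · exact le_min (hm.1 j).2.2
          (add_nonneg (feasible_nonneg_at hT hm j hs)
            (mul_nonneg (hcnn j) (le_max_right _ _)))
    · intro u hu i'
      rcases le_or_gt u s with hus | hsu
      · have hee : ∀ j, η j u = m j u := by
          intro j
          apply min_eq_left
          have h1 : m j u ≤ m j s := (hm.1 j).2.1 hu hs hus
          have h2 : 0 ≤ (bβ * w j) * max (u - s) 0 :=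
            mul_nonneg (hcnn j) (le_max_right _ _)
          linarith
        have e : ∑ j, refMatrix Q i' j * η j u = ∑ j, refMatrix Q i' j * m j u :=
          Finset.sum_congr rfl fun j _ => by rw [hee j]
        rw [e]
        exact hm.2 u hu i'
      · have hmax : max (u - s) 0 = u - s := max_eq_left (by linarith)
        rw [sum_ref Q (fun j => η j u) i']
        have hQn : ∀ j, 0 ≤ Q j i' := fun j => hQ.1 j i'
        have hfeasu : 0 ≤ ξ i' u + (m i' u - ∑ j, Q j i' * m j u) := by
          have := hm.2 u hu i'
          rwa [sum_ref] at this
        rcases le_total (m i' u) (m i' s + (bβ * w i') * (u - s)) with hcase | hcase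
        · have hηi : η i' u = m i' u := by
            simp only [hη, hmax]
            exact min_eq_left hcase
          have hkey1 : ∑ j, Q j i' * η j u ≤ ∑ j, Q j i' * m j u :=
            Finset.sum_le_sum fun j _ =>
              mul_le_mul_of_nonneg_left (min_le_left _ _) (hQn j)
          rw [hηi]
          linarith
        · have hηi : η i' u = m i' s + (bβ * w i') * (u - s) := by
            simp only [hη, hmax]
            exact min_eq_right hcase
          have hfeass : 0 ≤ ξ i' s + (m i' s - ∑ j, Q j i' * m j s) := by
            have := hm.2 s hs i'
            rwa [sum_ref] at this
          have hdrift : ξ i' s + β i' * (u - s) ≤ ξ i' u := by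
            have h' := (hβ i').2.2 hs hu (le_of_lt hsu)
            simp only at h'
            have e : β i' * (u - s) = β i' * u - β i' * s := by ring
            linarith
          have hkey2 : ∑ j, Q j i' * η j u
              ≤ ∑ j, Q j i' * (m j s + (bβ * w j) * (u - s)) := by
            refine Finset.sum_le_sum fun j _ => mul_le_mul_of_nonneg_left ?_ (hQn j)
            simp only [hη, hmax]
            exact min_le_right _ _
          have hsplit : ∑ j, Q j i' * (m j s + (bβ * w j) * (u - s))
              = ∑ j, Q j i' * m j s + (u - s) * (bβ * ∑ j, Q j i' * w j) := by
            have e1 : ∀ j, Q j i' * (m j s + (bβ * w j) * (u - s))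
                = Q j i' * m j s + (u - s) * (bβ * (Q j i' * w j)) := fun j => by ring
            rw [Finset.sum_congr rfl fun j _ => e1 j, Finset.sum_add_distrib,
              ← Finset.mul_sum, ← Finset.mul_sum]
          have husnn : 0 ≤ u - s := by linarith
          have hwQ : ∑ j, Q j i' * w j ≤ w i' - 1 := by
            have := hw1 i'; linarith
          have hQwnn : (0:ℝ) ≤ bβ * ∑ j, Q j i' * w j := by
            refine mul_nonneg hbβ0 (Finset.sum_nonneg fun j _ => mul_nonneg (hQn j) (hw0 j))
          have h5 : ∑ j, Q j i' * η j u
              ≤ ∑ j, Q j i' * m j s + (u - s) * (bβ * (w i' - 1)) := by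
            have h6 : (u - s) * (bβ * ∑ j, Q j i' * w j) ≤ (u - s) * (bβ * (w i' - 1)) :=
              mul_le_mul_of_nonneg_left (mul_le_mul_of_nonneg_left hwQ hbβ0) husnn
            calc ∑ j, Q j i' * η j u ≤ _ := hkey2
              _ = _ := hsplit
              _ ≤ _ := add_le_add_right h6 _
          have e7 : (u - s) * (bβ * (w i' - 1)) = (bβ * w i') * (u - s) - bβ * (u - s) := by
            ring
          have hprod : 0 ≤ β i' * (u - s) + bβ * (u - s) := by
            have h8 : 0 ≤ (u - s) * (β i' + bβ) :=
              mul_nonneg husnn (by linarith [bbeta_ge β i'])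
            nlinarith
          rw [hηi]
          linarith
  have hregle := regulator_le hT hηfe i ht
  have hηt : η i t ≤ m i s + ((∑ k, |β k|) * w i) * (t - s) := by
    have hmax : max (t - s) 0 = t - s := max_eq_left (by linarith)
    simp only [hη, hmax]
    exact min_le_right _ _
  calc regulator T Q ξ i t ≤ η i t := hregle
    _ ≤ m i s + ((∑ k, |β k|) * w i) * (t - s) := hηt
    _ ≤ regulator T Q ξ i s + ((∑ k, |β k|) * w i) * (t - s) + ε := by
        have : m i s ≤ regulator T Q ξ i s + ε := le_of_lt hz
        linarith

lemma regulator_abs_lip (hT : 0 ≤ T) (hd : 1 ≤ d) (hQ : Substochastic Q)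
    (hβ : ∀ i, DBeta T (β i) (ξ i))
    (hw0 : ∀ i, 0 ≤ w i) (hw1 : ∀ i, 1 ≤ w i - ∑ j, Q j i * w j)
    (i : Fin d) {x y : ℝ} (hx : x ∈ Set.Icc 0 T) (hy : y ∈ Set.Icc 0 T) :
    |regulator T Q ξ i x - regulator T Q ξ i y| ≤ ((∑ k, |β k|) * w i) * |x - y| := by
  have hne : ∃ ζ, Feasible T Q ξ ζ := feasible_exists hT hd hQ hβ
  rcases le_total x y with hxy | hxy
  · have h1 := regulator_mono hT hne i hx hy hxy
    have h2 := regulator_lip hT hd hQ hβ hw0 hw1 i hx hy hxy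
    rw [abs_of_nonpos (by linarith : regulator T Q ξ i x - regulator T Q ξ i y ≤ 0),
      abs_of_nonpos (by linarith : x - y ≤ 0)]
    have e : ((∑ k, |β k|) * w i) * -(x - y) = ((∑ k, |β k|) * w i) * (y - x) := by ring
    linarith
  · have h1 := regulator_mono hT hne i hy hx hxy
    have h2 := regulator_lip hT hd hQ hβ hw0 hw1 i hy hx hxy
    rw [abs_of_nonneg (by linarith : 0 ≤ regulator T Q ξ i x - regulator T Q ξ i y),
      abs_of_nonneg (by linarith : 0 ≤ x - y)]
    linarith

lemma regulator_feasible (hT : 0 ≤ T) (hd : 1 ≤ d) (hQ : Substochastic Q)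
    (hβ : ∀ i, DBeta T (β i) (ξ i))
    (hw0 : ∀ i, 0 ≤ w i) (hw1 : ∀ i, 1 ≤ w i - ∑ j, Q j i * w j) :
    Feasible T Q ξ (regulator T Q ξ) := by
  have hne : ∃ ζ, Feasible T Q ξ ζ := feasible_exists hT hd hQ hβ
  constructor
  · intro i
    refine ⟨?_, ?_, ?_⟩
    · refine cadlag_of_lip (mul_nonneg (bbeta_nonneg β) (hw0 i)) ?_
      intro x hx t ht
      exact regulator_abs_lip hT hd hQ hβ hw0 hw1 i hx ht
    · intro x hx y hy hxy
      exact regulator_mono hT hne i hx hy hxy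
    · exact regulator_nonneg hT hne i ⟨le_rfl, hT⟩
  · intro t ht i
    have := regulator_refl_nonneg hT hne ht hQ i
    rw [sum_ref Q (fun j => regulator T Q ξ j t) i]
    exact this

end RegulatorLip
section KeyShift

variable {d : ℕ} {T : ℝ} {Q : Matrix (Fin d) (Fin d) ℝ} {β : Fin d → ℝ}
  {ξ ζ : Fin d → ℝ → ℝ} {w : Fin d → ℝ}

lemma key_shift (hT : 0 ≤ T) (hd : 1 ≤ d) (hQ : Substochastic Q)
    (hβξ : ∀ i, DBeta T (β i) (ξ i))
    (hw0 : ∀ i, 0 ≤ w i) (hw1 : ∀ i, 1 ≤ w i - ∑ j, Q j i * w j)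
    {a : Fin d → ℝ} (ha0 : ∀ i, 0 ≤ a i)
    (hcl : ∀ i, ∀ t ∈ Set.Icc (0:ℝ) T, ∃ s ∈ Set.Icc (0:ℝ) T,
      |ξ i s - ζ i t| ≤ a i ∧ |s - t| ≤ a i)
    (i : Fin d) {t : ℝ} (ht : t ∈ Set.Icc (0:ℝ) T) :
    regulator T Q ζ i t ≤ regulator T Q ξ i t
      + ((1 + 2 * (∑ k, |β k|) * (∑ j, w j)) * ∑ j, a j) * w i := by
  set bβ : ℝ := ∑ k, |β k| with hbβdef
  set W : ℝ := ∑ j, w j with hWdef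
  set Sa : ℝ := ∑ j, a j with hSadef
  set A : ℝ := (1 + 2 * bβ * W) * Sa with hAdef
  have hbβ0 : 0 ≤ bβ := bbeta_nonneg β
  have hW0 : 0 ≤ W := Finset.sum_nonneg fun j _ => hw0 j
  have hSa0 : 0 ≤ Sa := Finset.sum_nonneg fun j _ => ha0 j
  have hA0 : 0 ≤ A := by
    have : 0 ≤ bβ * W := mul_nonneg hbβ0 hW0
    have h1 : (0:ℝ) ≤ 1 + 2 * bβ * W := by linarith
    exact mul_nonneg h1 hSa0
  have hfeasξ : Feasible T Q ξ (regulator T Q ξ) :=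
    regulator_feasible hT hd hQ hβξ hw0 hw1
  set η : Fin d → ℝ → ℝ := fun j u => regulator T Q ξ j u + A * w j with hη
  have hηfe : Feasible T Q ζ η := by
    constructor
    · intro j
      refine ⟨(hfeasξ.1 j).1.add_const _, ?_, ?_⟩
      · intro x hx y hy hxy
        have := (hfeasξ.1 j).2.1 hx hy hxy
        simp only [hη]
        linarith
      · exact add_nonneg (hfeasξ.1 j).2.2 (mul_nonneg hA0 (hw0 j))
    · intro t' ht' i'
      obtain ⟨s, hsI, h1, h2⟩ := hcl i' t' ht'
      have esum : ∑ j, refMatrix Q i' j * η j t'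
          = (regulator T Q ξ i' t' - ∑ j, Q j i' * regulator T Q ξ j t')
            + A * (w i' - ∑ j, Q j i' * w j) := by
        rw [sum_ref Q (fun j => η j t') i']
        have e2 : ∑ j, Q j i' * η j t'
            = ∑ j, Q j i' * regulator T Q ξ j t' + A * ∑ j, Q j i' * w j := by
          simp only [hη, mul_add, Finset.sum_add_distrib]
          congr 1
          rw [Finset.mul_sum]
          exact Finset.sum_congr rfl fun j _ => by ring
        simp only [hη]
        rw [e2]
        ring
      rw [esum]
      have F1 := regulator_refl_nonneg hT ⟨_, hfeasξ⟩ hsI hQ i'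
      have F2 : ξ i' s - a i' ≤ ζ i' t' := by
        have := (abs_le.1 h1).2
        linarith
      have F3 : regulator T Q ξ i' s ≤ regulator T Q ξ i' t' + (bβ * w i') * a i' := by
        have habs := regulator_abs_lip hT hd hQ hβξ hw0 hw1 i' hsI ht'
        rw [← hbβdef] at habs
        have h4 : (bβ * w i') * |s - t'| ≤ (bβ * w i') * a i' :=
          mul_le_mul_of_nonneg_left h2 (mul_nonneg hbβ0 (hw0 i'))
        have := (abs_le.1 habs).2
        linarith
      have F4 : ∑ j, Q j i' * regulator T Q ξ j t'
          ≤ ∑ j, Q j i' * regulator T Q ξ j s + bβ * W * a i' := by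
        have hterm : ∀ j ∈ Finset.univ, Q j i' * regulator T Q ξ j t'
            ≤ Q j i' * regulator T Q ξ j s + bβ * a i' * w j := by
          intro j _
          have habs := regulator_abs_lip hT hd hQ hβξ hw0 hw1 j ht' hsI
          rw [← hbβdef] at habs
          have h4 : (bβ * w j) * |t' - s| ≤ (bβ * w j) * a i' := by
            refine mul_le_mul_of_nonneg_left ?_ (mul_nonneg hbβ0 (hw0 j))
            rw [abs_sub_comm]; exact h2
          have hr : regulator T Q ξ j t' ≤ regulator T Q ξ j s + (bβ * w j) * a i' := by
            have := (abs_le.1 habs).2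
            linarith
          have hq0 := hQ.1 j i'
          have hq1 := entry_le_one hQ j i'
          have hnn : 0 ≤ (bβ * w j) * a i' :=
            mul_nonneg (mul_nonneg hbβ0 (hw0 j)) (ha0 i')
          calc Q j i' * regulator T Q ξ j t'
              ≤ Q j i' * (regulator T Q ξ j s + (bβ * w j) * a i') :=
                mul_le_mul_of_nonneg_left hr hq0
            _ = Q j i' * regulator T Q ξ j s + Q j i' * ((bβ * w j) * a i') := by ring
            _ ≤ Q j i' * regulator T Q ξ j s + 1 * ((bβ * w j) * a i') := by
                have := mul_le_mul_of_nonneg_right hq1 hnn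
                linarith
            _ = Q j i' * regulator T Q ξ j s + bβ * a i' * w j := by ring
        have hsum := Finset.sum_le_sum hterm
        rw [Finset.sum_add_distrib, ← Finset.mul_sum] at hsum
        have e : bβ * a i' * W = bβ * W * a i' := by ring
        rw [← hWdef] at hsum
        linarith
      have hwle : w i' ≤ W :=
        Finset.single_le_sum (f := fun j => w j) (fun j _ => hw0 j) (Finset.mem_univ i')
      have hale : a i' ≤ Sa :=
        Finset.single_le_sum (f := fun j => a j) (fun j _ => ha0 j) (Finset.mem_univ i')
      have hU1 : (bβ * w i') * a i' ≤ bβ * W * Sa :=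
        mul_le_mul (mul_le_mul_of_nonneg_left hwle hbβ0) hale (ha0 i')
          (mul_nonneg hbβ0 hW0)
      have hU2 : bβ * W * a i' ≤ bβ * W * Sa :=
        mul_le_mul_of_nonneg_left hale (mul_nonneg hbβ0 hW0)
      have hAw : A * 1 ≤ A * (w i' - ∑ j, Q j i' * w j) :=
        mul_le_mul_of_nonneg_left (hw1 i') hA0
      have hAe : A = Sa + 2 * (bβ * W * Sa) := by rw [hAdef]; ring
      have e0 : A * 1 = A := mul_one A
      linarith
  have hle := regulator_le hT hηfe i ht
  simp only [hη] at hle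
  exact hle

end KeyShift

section J1Lemmas

lemma isTimeChange_id {T : ℝ} (hT : 0 ≤ T) : IsTimeChange T id :=
  ⟨fun _ _ _ _ h => h, continuous_id.continuousOn, fun x hx => hx,
    fun x hx => ⟨x, hx, rfl⟩, rfl, rfl⟩

lemma j1set_nonneg {T : ℝ} {f g : ℝ → ℝ} :
    ∀ r ∈ {r : ℝ | ∃ lam : ℝ → ℝ, IsTimeChange T lam ∧
      r = max (unifDist T (fun t => f (lam t)) g) (unifDist T lam id)}, 0 ≤ r := by
  rintro r ⟨lam, hlam, rfl⟩
  refine le_max_of_le_right (Real.sSup_nonneg ?_)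
  rintro x ⟨t, ht, rfl⟩
  exact abs_nonneg _

lemma j1_nonneg {T : ℝ} (f g : ℝ → ℝ) : 0 ≤ J1Dist T f g :=
  Real.sInf_nonneg j1set_nonneg

lemma j1set_bddBelow {T : ℝ} {f g : ℝ → ℝ} :
    BddBelow {r : ℝ | ∃ lam : ℝ → ℝ, IsTimeChange T lam ∧
      r = max (unifDist T (fun t => f (lam t)) g) (unifDist T lam id)} :=
  ⟨0, fun r hr => j1set_nonneg r hr⟩

lemma j1_le_bound {T : ℝ} (hT : 0 ≤ T) {f g : ℝ → ℝ} {B : ℝ} (hB : 0 ≤ B)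
    (h : ∀ t ∈ Set.Icc (0:ℝ) T, |f t - g t| ≤ B) : J1Dist T f g ≤ B := by
  have hmem : max (unifDist T (fun t => f (id t)) g) (unifDist T id id)
      ∈ {r : ℝ | ∃ lam : ℝ → ℝ, IsTimeChange T lam ∧
        r = max (unifDist T (fun t => f (lam t)) g) (unifDist T lam id)} :=
    ⟨id, isTimeChange_id hT, rfl⟩
  refine le_trans (csInf_le j1set_bddBelow hmem) (max_le ?_ ?_)
  · refine Real.sSup_le ?_ hB
    rintro r ⟨t, ht, rfl⟩
    exact h t ht
  · refine Real.sSup_le ?_ hB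
    rintro r ⟨t, ht, rfl⟩
    simpa using hB

lemma j1_exists_lam {T : ℝ} (hT : 0 < T) {f g : ℝ → ℝ} {Bf Bg : ℝ}
    (hbf : ∀ s ∈ Set.Icc (0:ℝ) T, |f s| ≤ Bf) (hbg : ∀ s ∈ Set.Icc (0:ℝ) T, |g s| ≤ Bg)
    {ε : ℝ} (hε : 0 < ε) :
    ∃ lam, IsTimeChange T lam ∧ (∀ t ∈ Set.Icc (0:ℝ) T, |f (lam t) - g t| ≤ J1Dist T f g + ε)
      ∧ (∀ t ∈ Set.Icc (0:ℝ) T, |lam t - t| ≤ J1Dist T f g + ε) := by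
  have hlt : sInf {r : ℝ | ∃ lam : ℝ → ℝ, IsTimeChange T lam ∧
      r = max (unifDist T (fun t => f (lam t)) g) (unifDist T lam id)} < J1Dist T f g + ε :=
    lt_add_of_pos_right _ hε
  obtain ⟨r, ⟨lam, hlam, rfl⟩, hr⟩ :=
    exists_lt_of_csInf_lt
      (s := {r : ℝ | ∃ lam : ℝ → ℝ, IsTimeChange T lam ∧
        r = max (unifDist T (fun t => f (lam t)) g) (unifDist T lam id)})
      ⟨_, id, isTimeChange_id hT.le, rfl⟩ hlt
  refine ⟨lam, hlam, ?_, ?_⟩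
  · intro t ht
    have hbdd : BddAbove {r : ℝ | ∃ t ∈ Set.Icc (0:ℝ) T, r = |f (lam t) - g t|} := by
      refine ⟨Bf + Bg, ?_⟩
      rintro r ⟨t', ht', rfl⟩
      exact (abs_sub_le_abs_add_abs _ _).trans
        (add_le_add (hbf _ (hlam.2.2.1 ht')) (hbg _ ht'))
    have hmem : |f (lam t) - g t| ∈ {r : ℝ | ∃ t ∈ Set.Icc (0:ℝ) T, r = |f (lam t) - g t|} :=
      ⟨t, ht, rfl⟩
    calc |f (lam t) - g t| ≤ unifDist T (fun t => f (lam t)) g := le_csSup hbdd hmem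
      _ ≤ max (unifDist T (fun t => f (lam t)) g) (unifDist T lam id) := le_max_left _ _
      _ ≤ J1Dist T f g + ε := le_of_lt hr
  · intro t ht
    have hbdd : BddAbove {r : ℝ | ∃ t ∈ Set.Icc (0:ℝ) T, r = |lam t - id t|} := by
      refine ⟨T + T, ?_⟩
      rintro r ⟨t', ht', rfl⟩
      have h1 := hlam.2.2.1 ht'
      have h2 : |lam t'| ≤ T := abs_le.2 ⟨by linarith [h1.1], h1.2⟩
      have h3 : |(id t' : ℝ)| ≤ T := abs_le.2 ⟨by simpa using by linarith [ht'.1], by simpa using ht'.2⟩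
      exact (abs_sub_le_abs_add_abs _ _).trans (add_le_add h2 h3)
    have hmem : |lam t - id t| ∈ {r : ℝ | ∃ t ∈ Set.Icc (0:ℝ) T, r = |lam t - id t|} :=
      ⟨t, ht, rfl⟩
    calc |lam t - t| = |lam t - id t| := rfl
      _ ≤ unifDist T lam id := le_csSup hbdd hmem
      _ ≤ max (unifDist T (fun t => f (lam t)) g) (unifDist T lam id) := le_max_right _ _
      _ ≤ J1Dist T f g + ε := le_of_lt hr

end J1Lemmas

/-- The regulator map `ψ` is Lipschitz continuous on
`∏_{i=1}^d D^{β_i}[0,T]` with respect to the product `J₁` distance. -/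
theorem regulator_map_lipschitz_prodJ1
    (T : ℝ) (hT : 0 < T) (d : ℕ) (hd : 1 ≤ d) (β : Fin d → ℝ)
    (Q : Matrix (Fin d) (Fin d) ℝ) (hQ : Substochastic Q) :
    ∃ C : ℝ, ∀ ξ ζ : Fin d → ℝ → ℝ,
      (∀ i, DBeta T (β i) (ξ i)) → (∀ i, DBeta T (β i) (ζ i)) →
      prodJ1Dist T (regulator T Q ξ) (regulator T Q ζ) ≤ C * prodJ1Dist T ξ ζ := by
  obtain ⟨w, hw0, hw1⟩ := exists_w hd Q hQ
  set bβ : ℝ := ∑ k, |β k| with hbβdef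
  set W : ℝ := ∑ j, w j with hWdef
  set K : ℝ := 1 + 2 * bβ * W with hKdef
  have hbβ0 : 0 ≤ bβ := bbeta_nonneg β
  have hW0 : 0 ≤ W := Finset.sum_nonneg fun j _ => hw0 j
  have hK0 : 0 ≤ K := by
    have : 0 ≤ bβ * W := mul_nonneg hbβ0 hW0
    rw [hKdef]; linarith
  set C : ℝ := K * W with hCdef
  have hC0 : 0 ≤ C := mul_nonneg hK0 hW0
  refine ⟨C, ?_⟩
  intro ξ ζ hβξ hβζ
  have hmain : ∀ ε : ℝ, 0 < ε →
      prodJ1Dist T (regulator T Q ξ) (regulator T Q ζ)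
        ≤ C * prodJ1Dist T ξ ζ + (C * d) * ε := by
    intro ε hε
    set a : Fin d → ℝ := fun i => J1Dist T (ξ i) (ζ i) + ε with hadef
    have ha0 : ∀ i, 0 ≤ a i := fun i => by
      have := j1_nonneg (T := T) (ξ i) (ζ i)
      rw [hadef]; dsimp only; linarith
    -- closeness in both directions from near-optimal time changes
    have hcl : ∀ i : Fin d,
        (∀ t ∈ Set.Icc (0:ℝ) T, ∃ s ∈ Set.Icc (0:ℝ) T,
          |ξ i s - ζ i t| ≤ a i ∧ |s - t| ≤ a i) ∧
        (∀ t ∈ Set.Icc (0:ℝ) T, ∃ s ∈ Set.Icc (0:ℝ) T,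
          |ζ i s - ξ i t| ≤ a i ∧ |s - t| ≤ a i) := by
      intro i
      obtain ⟨lam, hlam, h1, h2⟩ :=
        j1_exists_lam hT (fun s hs => dbeta_abs_bound hT.le (hβξ i) hs)
          (fun s hs => dbeta_abs_bound hT.le (hβζ i) hs) hε
      constructor
      · intro t ht
        exact ⟨lam t, hlam.2.2.1 ht, h1 t ht, h2 t ht⟩
      · intro t ht
        obtain ⟨s, hs, hlams⟩ := hlam.2.2.2.1 ht
        refine ⟨s, hs, ?_, ?_⟩
        · have := h1 s hs
          rw [hlams] at this
          rw [abs_sub_comm]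
          exact this
        · have := h2 s hs
          rw [hlams] at this
          rw [abs_sub_comm]
          exact this
    set Sa : ℝ := ∑ j, a j with hSadef
    have hSa0 : 0 ≤ Sa := Finset.sum_nonneg fun j _ => ha0 j
    have hbound : ∀ i : Fin d, ∀ t ∈ Set.Icc (0:ℝ) T,
        |regulator T Q ξ i t - regulator T Q ζ i t| ≤ (K * Sa) * w i := by
      intro i t ht
      have hub := key_shift hT.le hd hQ hβξ hw0 hw1 ha0 (fun i => (hcl i).1) i ht
      have hlb := key_shift hT.le hd hQ hβζ hw0 hw1 ha0 (fun i => (hcl i).2) i ht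
      rw [← hbβdef, ← hWdef, ← hSadef, ← hKdef] at hub hlb
      rw [abs_le]
      constructor <;> [linarith; linarith]
    have hKSa0 : 0 ≤ K * Sa := mul_nonneg hK0 hSa0
    have hJi : ∀ i : Fin d,
        J1Dist T (regulator T Q ξ i) (regulator T Q ζ i) ≤ (K * Sa) * w i := by
      intro i
      exact j1_le_bound hT.le (mul_nonneg hKSa0 (hw0 i)) (hbound i)
    have hsum : prodJ1Dist T (regulator T Q ξ) (regulator T Q ζ) ≤ (K * Sa) * W := by
      have := Finset.sum_le_sum (fun i (_ : i ∈ Finset.univ) => hJi i)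
      rw [← Finset.mul_sum] at this
      exact this
    have hSaeq : Sa = prodJ1Dist T ξ ζ + d * ε := by
      rw [hSadef, hadef]
      rw [Finset.sum_add_distrib, Finset.sum_const, Finset.card_univ, Fintype.card_fin,
        nsmul_eq_mul]
      rfl
    have : (K * Sa) * W = C * prodJ1Dist T ξ ζ + (C * d) * ε := by
      rw [hSaeq, hCdef]; ring
    linarith
  apply le_of_forall_pos_le_add
  intro ε hε
  have hpos : (0:ℝ) < C * d + 1 := by
    have : (0:ℝ) ≤ (d:ℝ) := Nat.cast_nonneg d
    nlinarith
  have h := hmain (ε / (C * d + 1)) (by positivity)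
  have h2 : (C * d) * (ε / (C * d + 1)) ≤ ε := by
    rw [div_eq_inv_mul]
    have hle : C * d ≤ C * d + 1 := by linarith
    have : (C * d) * ((C * d + 1)⁻¹ * ε) = (C * d) / (C * d + 1) * ε := by ring
    rw [this]
    have hfrac : (C * d) / (C * d + 1) ≤ 1 := by
      rw [div_le_one hpos]; linarith
    nlinarith [mul_nonneg (mul_nonneg hC0 (Nat.cast_nonneg d : (0:ℝ) ≤ d)) hε.le]
  linarith
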